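/- For all γ₁, γ₂ ∈ ℂ, the second-order operators Î₂ := p̂₂² + γ₁ q̂₂p̂₂ + γ₂((q̂₁² + q̂₂²)p̂₂² − Ĉ²) and Î₂′ := p̂₁² + γ₁ q̂₁p̂₁ + γ₂(q̂₁² + q̂₂²)p̂₁² satisfy ⁅Î₂, Ĥ₂⁆ = 0, ⁅Î₂′, Ĥ₂⁆ = 0, and the algebraic relation Ĥ₂ = Î₂ + Î₂′, where Ĥ₂ := p̂₁² + p̂₂² + γ₁D + γ₂D². -/

import Mathlib

noncomputable section

/-- `V = ℂ[q₁,q₂]`, the polynomial ring in two variables over `ℂ`. -/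
abbrev V : Type := MvPolynomial (Fin 2) ℂ

/-- `q̂₁`: multiplication by `q₁`. -/
noncomputable def q1 : Module.End ℂ V := LinearMap.mulLeft ℂ (MvPolynomial.X 0)

/-- `q̂₂`: multiplication by `q₂`. -/
noncomputable def q2 : Module.End ℂ V := LinearMap.mulLeft ℂ (MvPolynomial.X 1)

/-- `p̂₁ = −i ∂/∂q₁`. -/
noncomputable def p1 : Module.End ℂ V :=
  (-Complex.I) • (MvPolynomial.pderiv (0 : Fin 2)).toLinearMap

/-- `p̂₂ = −i ∂/∂q₂`. -/
noncomputable def p2 : Module.End ℂ V :=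
  (-Complex.I) • (MvPolynomial.pderiv (1 : Fin 2)).toLinearMap

/-- `D = q̂₁p̂₁ + q̂₂p̂₂`. -/
noncomputable def Dop : Module.End ℂ V := q1 * p1 + q2 * p2

/-- `Ĉ = q̂₁p̂₂ − q̂₂p̂₁`, the quantum angular momentum. -/
noncomputable def Cop : Module.End ℂ V := q1 * p2 - q2 * p1

/-- `Ĥ₂ = p̂₁² + p̂₂² + γ₁D + γ₂D²`. -/
noncomputable def H2 (γ₁ γ₂ : ℂ) : Module.End ℂ V :=
  p1 ^ 2 + p2 ^ 2 + γ₁ • Dop + γ₂ • Dop ^ 2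

/-- `Î₂ = p̂₂² + γ₁ q̂₂p̂₂ + γ₂((q̂₁² + q̂₂²)p̂₂² − Ĉ²)`. -/
noncomputable def I2 (γ₁ γ₂ : ℂ) : Module.End ℂ V :=
  p2 ^ 2 + γ₁ • (q2 * p2) + γ₂ • ((q1 ^ 2 + q2 ^ 2) * p2 ^ 2 - Cop ^ 2)

/-- `Î₂′ = p̂₁² + γ₁ q̂₁p̂₁ + γ₂(q̂₁² + q̂₂²)p̂₁²`. -/
noncomputable def I2' (γ₁ γ₂ : ℂ) : Module.End ℂ V :=
  p1 ^ 2 + γ₁ • (q1 * p1) + γ₂ • ((q1 ^ 2 + q2 ^ 2) * p1 ^ 2)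

/- Auxiliary commutation relations. -/

lemma pq11 : p1 * q1 = q1 * p1 - Complex.I • 1 := by
  ext f
  simp [p1, q1, Module.End.mul_apply, MvPolynomial.pderiv_mul, MvPolynomial.pderiv_X,
    smul_smul, mul_comm]
  ring

lemma pq22 : p2 * q2 = q2 * p2 - Complex.I • 1 := by
  ext f
  simp [p2, q2, Module.End.mul_apply, MvPolynomial.pderiv_mul, MvPolynomial.pderiv_X,
    smul_smul, mul_comm]
  ring

lemma pq12 : p1 * q2 = q2 * p1 := by
  ext f
  simp [p1, q2, Module.End.mul_apply, MvPolynomial.pderiv_mul, MvPolynomial.pderiv_X]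

lemma pq21 : p2 * q1 = q1 * p2 := by
  ext f
  simp [p2, q1, Module.End.mul_apply, MvPolynomial.pderiv_mul, MvPolynomial.pderiv_X]

open MvPolynomial in
lemma pderiv_pderiv_comm (i j : Fin 2) (f : MvPolynomial (Fin 2) ℂ) :
    pderiv i (pderiv j f) = pderiv j (pderiv i f) := by
  induction f using MvPolynomial.induction_on with
  | C a => simp
  | add p q hp hq => simp [hp, hq]
  | mul_X p n ih =>
    simp [pderiv_mul, ih, Pi.single_apply, apply_ite (pderiv i), apply_ite (pderiv j)]; ring

lemma pdcomm : ((MvPolynomial.pderiv (1 : Fin 2)).toLinearMap : Module.End ℂ V)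
      * (MvPolynomial.pderiv (0 : Fin 2)).toLinearMap
    = ((MvPolynomial.pderiv (0 : Fin 2)).toLinearMap : Module.End ℂ V)
      * (MvPolynomial.pderiv (1 : Fin 2)).toLinearMap :=
  LinearMap.ext fun f => pderiv_pderiv_comm 1 0 f

lemma pp21 : p2 * p1 = p1 * p2 := by
  rw [p1, p2, smul_mul_assoc, mul_smul_comm, smul_mul_assoc, mul_smul_comm, pdcomm]

lemma qq21 : q2 * q1 = q1 * q2 := by
  ext f
  simp [q1, q2, Module.End.mul_apply]
  ring

lemma pq11' (x : Module.End ℂ V) : p1 * (q1 * x) = q1 * (p1 * x) - Complex.I • x := by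
  rw [← mul_assoc, pq11, sub_mul, mul_assoc, smul_mul_assoc, one_mul]

lemma pq22' (x : Module.End ℂ V) : p2 * (q2 * x) = q2 * (p2 * x) - Complex.I • x := by
  rw [← mul_assoc, pq22, sub_mul, mul_assoc, smul_mul_assoc, one_mul]

lemma pq12' (x : Module.End ℂ V) : p1 * (q2 * x) = q2 * (p1 * x) := by
  rw [← mul_assoc, pq12, mul_assoc]

lemma pq21' (x : Module.End ℂ V) : p2 * (q1 * x) = q1 * (p2 * x) := by
  rw [← mul_assoc, pq21, mul_assoc]

lemma pp21' (x : Module.End ℂ V) : p2 * (p1 * x) = p1 * (p2 * x) := by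
  rw [← mul_assoc, pp21, mul_assoc]

lemma qq21' (x : Module.End ℂ V) : q2 * (q1 * x) = q1 * (q2 * x) := by
  rw [← mul_assoc, qq21, mul_assoc]

lemma hsum (γ₁ γ₂ : ℂ) : H2 γ₁ γ₂ = I2 γ₁ γ₂ + I2' γ₁ γ₂ := by
  simp only [H2, I2, I2', Dop, Cop, pow_two, mul_add, add_mul, mul_sub, sub_mul,
    smul_add, smul_sub, smul_smul, smul_mul_assoc, mul_smul_comm, mul_assoc,
    pq11', pq22', pq12', pq21', pp21', qq21', pq11, pq22, pq12, pq21, pp21, qq21,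
    mul_one, one_mul]
  module

set_option maxHeartbeats 4000000 in
lemma keycomm (γ₁ γ₂ : ℂ) : I2 γ₁ γ₂ * I2' γ₁ γ₂ = I2' γ₁ γ₂ * I2 γ₁ γ₂ := by
  simp only [I2, I2', Dop, Cop, pow_two, mul_add, add_mul, mul_sub, sub_mul,
    smul_add, smul_sub, smul_smul, smul_mul_assoc, mul_smul_comm, mul_assoc,
    pq11', pq22', pq12', pq21', pp21', qq21', pq11, pq22, pq12, pq21, pp21, qq21,
    mul_one, one_mul]
  module

/-- `Î₂` and `Î₂′` commute with `Ĥ₂` and `Ĥ₂ = Î₂ + Î₂′`. -/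
theorem quadratic_zernike_symmetries (γ₁ γ₂ : ℂ) :
    I2 γ₁ γ₂ * H2 γ₁ γ₂ - H2 γ₁ γ₂ * I2 γ₁ γ₂ = 0 ∧
    I2' γ₁ γ₂ * H2 γ₁ γ₂ - H2 γ₁ γ₂ * I2' γ₁ γ₂ = 0 ∧
    H2 γ₁ γ₂ = I2 γ₁ γ₂ + I2' γ₁ γ₂ := by
  refine ⟨?_, ?_, hsum γ₁ γ₂⟩
  · rw [hsum, mul_add, add_mul, keycomm]
    abel
  · rw [hsum, mul_add, add_mul, keycomm]
    abel
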